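/- Let X be a finite-dimensional smooth real Banach space with dim X ≥ 2. Then there exist unit vectors x, y ∈ S_X with y ≠ ±x such that (x, y) is a weak CPP. -/

import Mathlib

open Metric

/-- Birkhoff-James orthogonality: `x ⊥_B y` iff `‖x + t y‖ ≥ ‖x‖` for all real `t`. -/
def BJOrth {X : Type*} [NormedAddCommGroup X] [NormedSpace ℝ X] (x y : X) : Prop :=
  ∀ t : ℝ, ‖x‖ ≤ ‖x + t • y‖

/-- `(x, y)` is a compatible point pair with constant `(r, μ)`. -/
def IsCPPConst {X Y : Type*} [NormedAddCommGroup X] [NormedSpace ℝ X]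
    [NormedAddCommGroup Y] [NormedSpace ℝ Y] (x : X) (y : Y) (r μ : ℝ) : Prop :=
  ∀ z : X, ‖z‖ = 1 → BJOrth x z → ∀ w : Y, ‖w‖ = 1 → BJOrth y w →
    ∀ a b : ℝ, ‖a • x + b • z - x‖ ≤ r → ‖a • x + b • z‖ = 1 →
      ‖a • y + (b * μ) • w‖ ≤ 1

/-- `(x, y)` is a compatible point pair (CPP). -/
def IsCPP {X Y : Type*} [NormedAddCommGroup X] [NormedSpace ℝ X]
    [NormedAddCommGroup Y] [NormedSpace ℝ Y] (x : X) (y : Y) : Prop :=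
  ∃ r > 0, ∃ μ > 0, IsCPPConst x y r μ

/-- `(x, y)` is a weakly compatible point pair (weak CPP). -/
def IsWeakCPP {X Y : Type*} [NormedAddCommGroup X] [NormedSpace ℝ X]
    [NormedAddCommGroup Y] [NormedSpace ℝ Y] (x : X) (y : Y) : Prop :=
  ∃ z : X, ‖z‖ = 1 ∧ BJOrth x z ∧ ∃ w : Y, ‖w‖ = 1 ∧ BJOrth y w ∧
    ∃ r > 0, ∃ μ > 0, ∀ a b : ℝ, ‖a • x + b • z - x‖ ≤ r → ‖a • x + b • z‖ = 1 →
      ‖a • y + (b * μ) • w‖ ≤ 1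

/-- A normed space is smooth if every unit vector has a unique supporting functional. -/
def SmoothSp (X : Type*) [NormedAddCommGroup X] [NormedSpace ℝ X] : Prop :=
  ∀ x : X, ‖x‖ = 1 → ∃! f : X →L[ℝ] ℝ, ‖f‖ = 1 ∧ f x = 1

set_option maxHeartbeats 2000000 in
theorem stmt6 {X : Type*} [NormedAddCommGroup X] [NormedSpace ℝ X]
    [FiniteDimensional ℝ X] (hdim : 2 ≤ Module.finrank ℝ X) (hX : SmoothSp X) :
    ∃ x y : X, ‖x‖ = 1 ∧ ‖y‖ = 1 ∧ y ≠ x ∧ y ≠ -x ∧ IsWeakCPP x y := by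
  classical
  set n := Module.finrank ℝ X with hn
  have hn2 : 2 ≤ n := hdim
  let b : Module.Basis (Fin n) ℝ X := Module.finBasis ℝ X
  let i0 : Fin n := ⟨0, by omega⟩
  let i1 : Fin n := ⟨1, by omega⟩
  have hi01 : i0 ≠ i1 := by simp [i0, i1, Fin.ext_iff]
  let vv : Fin n → X := fun i =>
    if i = i0 then b i1 else if i = i1 then -(b i0 + b i1) else (2⁻¹ : ℝ) • b i
  let T₀ : X →ₗ[ℝ] X := b.constr ℝ vv
  have hT0 : T₀ (b i0) = b i1 := by
    show (b.constr ℝ) vv (b i0) = b i1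
    rw [Module.Basis.constr_basis]; simp [vv]
  have hT1 : T₀ (b i1) = -(b i0 + b i1) := by
    show (b.constr ℝ) vv (b i1) = -(b i0 + b i1)
    rw [Module.Basis.constr_basis]; simp [vv, hi01.symm]
  have hTi : ∀ i, i ≠ i0 → i ≠ i1 → T₀ (b i) = (2⁻¹ : ℝ) • b i := by
    intro i h0 h1
    show (b.constr ℝ) vv (b i) = (2⁻¹ : ℝ) • b i
    rw [Module.Basis.constr_basis]; simp [vv, h0, h1]
  -- injectivity
  let uu : Fin n → X := fun i =>
    if i = i0 then -(b i0 + b i1) else if i = i1 then b i0 else (2 : ℝ) • b i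
  let S : X →ₗ[ℝ] X := b.constr ℝ uu
  have hS0 : S (b i0) = -(b i0 + b i1) := by
    show (b.constr ℝ) uu (b i0) = -(b i0 + b i1)
    rw [Module.Basis.constr_basis]; simp [uu]
  have hS1 : S (b i1) = b i0 := by
    show (b.constr ℝ) uu (b i1) = b i0
    rw [Module.Basis.constr_basis]; simp [uu, hi01.symm]
  have hSi : ∀ i, i ≠ i0 → i ≠ i1 → S (b i) = (2 : ℝ) • b i := by
    intro i h0 h1
    show (b.constr ℝ) uu (b i) = (2 : ℝ) • b i
    rw [Module.Basis.constr_basis]; simp [uu, h0, h1]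
  have hST : S.comp T₀ = LinearMap.id := by
    apply b.ext
    intro i
    by_cases h0 : i = i0
    · subst h0; simp [hT0, hS1]
    by_cases h1 : i = i1
    · subst h1
      simp only [LinearMap.comp_apply, hT1, map_neg, map_add, hS0, hS1, LinearMap.id_apply]
      abel
    · simp [LinearMap.comp_apply, hTi i h0 h1, hSi i h0 h1, smul_smul]
  have hinj : Function.Injective T₀ :=
    Function.LeftInverse.injective (g := S) (fun u => LinearMap.congr_fun hST u)
  -- the continuous linear map
  let T : X →L[ℝ] X := LinearMap.toContinuousLinearMap T₀
  have hTapp : ∀ u : X, T u = T₀ u := fun u => rfl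
  set c : ℝ := ‖T‖ with hc
  have hT3 : T₀ (T₀ (T₀ (b i0))) = b i0 := by
    rw [hT0, hT1, map_neg, map_add, hT0, hT1]; abel
  have hb0 : b i0 ≠ 0 := b.ne_zero i0
  have hb0n : 0 < ‖b i0‖ := norm_pos_iff.2 hb0
  have hc0 : (0 : ℝ) ≤ c := by rw [hc]; exact norm_nonneg T
  have hcle : ∀ u : X, ‖T u‖ ≤ c * ‖u‖ := by
    intro u; rw [hc]; exact T.le_opNorm u
  have hc3 : ‖b i0‖ ≤ c * (c * (c * ‖b i0‖)) := by
    calc ‖b i0‖ = ‖T (T (T (b i0)))‖ := by rw [hTapp, hTapp, hTapp, hT3]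
    _ ≤ c * ‖T (T (b i0))‖ := hcle _
    _ ≤ c * (c * ‖T (b i0)‖) := mul_le_mul_of_nonneg_left (hcle _) hc0
    _ ≤ c * (c * (c * ‖b i0‖)) := by
        have h := mul_le_mul_of_nonneg_left (hcle (b i0)) hc0
        exact mul_le_mul_of_nonneg_left h hc0
  have hcube : 1 ≤ c * (c * c) := by
    by_contra h
    push_neg at h
    nlinarith [hb0n, hc3, h]
  have hc1 : 1 ≤ c := by nlinarith [hcube, hc0, mul_nonneg hc0 hc0]
  have hcpos : 0 < c := lt_of_lt_of_le one_pos hc1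
  -- key eigenvalue-freeness
  have key : ∀ d : ℝ, 1 ≤ |d| → ∀ v : X, T₀ v = d • v → v = 0 := by
    intro d hd v hv
    have hd2 : d - 2⁻¹ ≠ 0 := by
      intro he
      rw [sub_eq_zero] at he
      rw [he, abs_of_pos (by norm_num : (0:ℝ) < 2⁻¹)] at hd
      norm_num at hd
    let P : Submodule ℝ X := Submodule.span ℝ {b i0, b i1}
    have hm0 : b i0 ∈ P := Submodule.subset_span (by simp)
    have hm1 : b i1 ∈ P := Submodule.subset_span (by simp)
    let L : X →ₗ[ℝ] X := T₀ - (2⁻¹ : ℝ) • LinearMap.id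
    have hLb : ∀ i, L (b i) ∈ P := by
      intro i
      by_cases h0 : i = i0
      · subst h0
        have : L (b i0) = b i1 - (2⁻¹ : ℝ) • b i0 := by
          simp [L, hT0, LinearMap.sub_apply]
        rw [this]; exact sub_mem hm1 (P.smul_mem _ hm0)
      by_cases h1 : i = i1
      · subst h1
        have : L (b i1) = -(b i0 + b i1) - (2⁻¹ : ℝ) • b i1 := by
          simp [L, hT1, LinearMap.sub_apply]
        rw [this]
        exact sub_mem (neg_mem (add_mem hm0 hm1)) (P.smul_mem _ hm1)
      · have : L (b i) = 0 := by
          simp [L, hTi i h0 h1, LinearMap.sub_apply]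
        rw [this]; exact zero_mem P
    have hLv : L v ∈ P := by
      have hmap : Submodule.map L ⊤ ≤ P := by
        rw [← b.span_eq, Submodule.map_span, Submodule.span_le]
        rintro _ ⟨_, ⟨i, rfl⟩, rfl⟩
        exact hLb i
      exact hmap ⟨v, trivial, rfl⟩
    have hvP : v ∈ P := by
      have hLv2 : L v = (d - 2⁻¹) • v := by
        simp [L, LinearMap.sub_apply, hv, sub_smul]
      have := P.smul_mem (d - 2⁻¹)⁻¹ (hLv2 ▸ hLv)
      rwa [inv_smul_smul₀ hd2] at this
    obtain ⟨α, β, hab⟩ := Submodule.mem_span_pair.mp hvP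
    have heq : α • b i1 + β • (-(b i0 + b i1)) = d • (α • b i0 + β • b i1) := by
      calc α • b i1 + β • (-(b i0 + b i1)) = T₀ (α • b i0 + β • b i1) := by
            rw [map_add, map_smul, map_smul, hT0, hT1]
      _ = d • (α • b i0 + β • b i1) := by rw [hab, hv]
    have h0 := congrArg (fun u => b.repr u i0) heq
    have h1 := congrArg (fun u => b.repr u i1) heq
    simp only [map_add, map_smul, map_neg, Module.Basis.repr_self, Finsupp.coe_add, Finsupp.coe_smul,
      Finsupp.coe_neg, Pi.add_apply, Pi.smul_apply, Pi.neg_apply, Finsupp.single_apply,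
      hi01, hi01.symm, if_true, if_false, smul_eq_mul] at h0 h1
    norm_num at h0 h1
    -- h0 : -β... ; h1 : ...
    have hβ : β * (d * d + d + 1) = 0 := by linear_combination -h0 - d * h1
    have hdpos : d * d + d + 1 > 0 := by nlinarith [sq_nonneg (d + 2⁻¹)]
    have hβ0 : β = 0 := by
      rcases mul_eq_zero.mp hβ with h | h
      · exact h
      · linarith
    have hα0 : α = 0 := by
      rw [hβ0] at h1; linarith
    rw [← hab, hα0, hβ0]; simp
  -- norm attainment
  haveI : Nontrivial X := by
    have : 0 < n := by omega
    exact Module.nontrivial_of_finrank_pos this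
  have hsc : IsCompact (sphere (0 : X) 1) := isCompact_sphere 0 1
  have hsne : (sphere (0 : X) 1).Nonempty := by
    obtain ⟨v, hv⟩ := exists_ne (0 : X)
    refine ⟨‖v‖⁻¹ • v, ?_⟩
    simp [mem_sphere_zero_iff_norm, norm_smul, abs_of_nonneg,
      inv_mul_cancel₀ (norm_ne_zero_iff.2 hv)]
  obtain ⟨x, hxs, hmax⟩ := hsc.exists_isMaxOn hsne (T.continuous.norm.continuousOn)
  have hx1 : ‖x‖ = 1 := mem_sphere_zero_iff_norm.mp hxs
  have hTxc : ‖T x‖ = c := by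
    refine le_antisymm (by simpa [hx1] using T.le_opNorm x) ?_
    refine ContinuousLinearMap.opNorm_le_bound T (norm_nonneg _) fun u => ?_
    rcases eq_or_ne u 0 with rfl | hu
    · simp
    · have hun : 0 < ‖u‖ := norm_pos_iff.2 hu
      have h1 : ‖u‖⁻¹ • u ∈ sphere (0 : X) 1 := by
        simp [mem_sphere_zero_iff_norm, norm_smul, abs_of_nonneg,
          inv_mul_cancel₀ hun.ne']
      have h2 : ‖T (‖u‖⁻¹ • u)‖ ≤ ‖T x‖ := hmax h1
      rw [map_smul, norm_smul, norm_inv, norm_norm] at h2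
      calc ‖T u‖ = ‖u‖ * (‖u‖⁻¹ * ‖T u‖) := by field_simp
      _ ≤ ‖u‖ * ‖T x‖ := by
          exact mul_le_mul_of_nonneg_left h2 (norm_nonneg u)
      _ = ‖T x‖ * ‖u‖ := mul_comm _ _
  set y : X := c⁻¹ • T x with hy
  have hy1 : ‖y‖ = 1 := by
    rw [hy, norm_smul, norm_inv, Real.norm_eq_abs, abs_of_pos hcpos, hTxc,
      inv_mul_cancel₀ hcpos.ne']
  have hcy : c • y = T x := by rw [hy, smul_smul, mul_inv_cancel₀ hcpos.ne', one_smul]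
  -- eigen facts: y ≠ x, y ≠ -x
  have hx0 : x ≠ 0 := by intro h; rw [h, norm_zero] at hx1; norm_num at hx1
  have hyx : y ≠ x := by
    intro h
    have : T₀ x = c • x := by rw [← hTapp, ← hcy, h]
    exact hx0 (key c (by rw [abs_of_pos hcpos]; exact hc1) x this)
  have hynx : y ≠ -x := by
    intro h
    have : T₀ x = (-c) • x := by
      rw [← hTapp, ← hcy, h, smul_neg, neg_smul]
    refine hx0 (key (-c) ?_ x this)
    rw [abs_neg, abs_of_pos hcpos]; exact hc1
  -- dual functionals
  have hy0 : y ≠ 0 := by intro h; rw [h, norm_zero] at hy1; norm_num at hy1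
  obtain ⟨g, hg1, hgy⟩ := exists_dual_vector ℝ y (norm_ne_zero_iff.2 hy0)
  have hgy1 : g y = 1 := by rw [hgy, hy1]; norm_num
  let f : X →L[ℝ] ℝ := c⁻¹ • (g.comp T)
  have hfdef : f = c⁻¹ • (g.comp T) := rfl
  have hfapp : ∀ u : X, f u = c⁻¹ * g (T u) := by
    intro u
    simp only [f, ContinuousLinearMap.smul_apply, ContinuousLinearMap.comp_apply,
      smul_eq_mul]
  have hfx : f x = 1 := by
    rw [hfapp, ← hcy, map_smul, smul_eq_mul, ← mul_assoc,
      inv_mul_cancel₀ hcpos.ne', one_mul, hgy1]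
  have hfle : ‖f‖ ≤ 1 := by
    have h1 : ‖f‖ ≤ ‖(c⁻¹ : ℝ)‖ * ‖g.comp T‖ := by
      rw [hfdef, norm_smul (c⁻¹ : ℝ) (g.comp T)]
    have h2 : ‖g.comp T‖ ≤ ‖g‖ * ‖T‖ := ContinuousLinearMap.opNorm_comp_le _ _
    have h3 : ‖(c⁻¹ : ℝ)‖ = c⁻¹ := by
      rw [Real.norm_eq_abs, abs_of_pos (inv_pos.2 hcpos)]
    rw [h3] at h1
    calc ‖f‖ ≤ c⁻¹ * ‖g.comp T‖ := h1
    _ ≤ c⁻¹ * (‖g‖ * ‖T‖) := by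
        exact mul_le_mul_of_nonneg_left h2 (inv_pos.2 hcpos).le
    _ = 1 := by rw [hg1, one_mul, ← hc, inv_mul_cancel₀ hcpos.ne']
  clear_value f y c T S T₀ uu vv
  -- z in the kernel of f
  obtain ⟨z₀, hz₀ne, hfz₀⟩ : ∃ z₀ : X, z₀ ≠ 0 ∧ f z₀ = 0 := by
    by_contra hcon
    push_neg at hcon
    have hinjf : Function.Injective f := by
      intro u v huv
      by_contra hne
      have : u - v ≠ 0 := sub_ne_zero.2 hne
      have := hcon (u - v) this
      rw [map_sub, huv, sub_self] at this
      exact this rfl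
    have hle := LinearMap.finrank_le_finrank_of_injective
      (f := (f : X →ₗ[ℝ] ℝ)) hinjf
    rw [Module.finrank_self] at hle
    omega
  set z : X := ‖z₀‖⁻¹ • z₀ with hzdef
  have hz₀n : 0 < ‖z₀‖ := norm_pos_iff.2 hz₀ne
  have hz1 : ‖z‖ = 1 := by
    rw [hzdef, norm_smul, norm_inv, norm_norm, inv_mul_cancel₀ hz₀n.ne']
  have hfz : f z = 0 := by rw [hzdef, map_smul, hfz₀, smul_zero]
  have hz0 : z ≠ 0 := by intro h; rw [h, norm_zero] at hz1; norm_num at hz1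
  have hBJxz : BJOrth x z := by
    intro t
    have h1 : f (x + t • z) = 1 := by
      rw [map_add, map_smul, hfz, hfx, smul_zero, add_zero]
    have h2 : ‖f (x + t • z)‖ ≤ ‖f‖ * ‖x + t • z‖ := f.le_opNorm _
    rw [h1] at h2
    rw [norm_one] at h2
    nlinarith [norm_nonneg (x + t • z), hx1]
  -- w
  have hgTz : g (T z) = 0 := by
    have := hfz
    rw [hfapp] at this
    rcases mul_eq_zero.mp this with h | h
    · exact absurd h (inv_ne_zero hcpos.ne')
    · exact h
  have hw₀ne : T z ≠ 0 := by
    intro h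
    apply hz0
    apply hinj
    rw [← hTapp, h, map_zero]
  have hw₀n : 0 < ‖T z‖ := norm_pos_iff.2 hw₀ne
  set w : X := ‖T z‖⁻¹ • T z with hwdef
  have hw1 : ‖w‖ = 1 := by
    rw [hwdef, norm_smul, norm_inv, norm_norm, inv_mul_cancel₀ hw₀n.ne']
  have hgw : g w = 0 := by rw [hwdef, map_smul, hgTz, smul_zero]
  have hBJyw : BJOrth y w := by
    intro t
    have h1 : g (y + t • w) = 1 := by
      rw [map_add, map_smul, hgw, hgy1, smul_zero, add_zero]
    have h2 : ‖g (y + t • w)‖ ≤ ‖g‖ * ‖y + t • w‖ := g.le_opNorm _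
    rw [h1, hg1, one_mul] at h2
    rw [norm_one] at h2
    rw [hy1]; exact h2
  clear_value w z
  refine ⟨x, y, hx1, hy1, hyx, hynx, z, hz1, hBJxz, w, hw1, hBJyw,
    1, one_pos, c⁻¹ * ‖T z‖, by positivity, fun a b _ hab => ?_⟩
  have heq : a • y + (b * (c⁻¹ * ‖T z‖)) • w = c⁻¹ • T (a • x + b • z) := by
    rw [map_add, map_smul, map_smul, hy, hwdef]
    rw [smul_smul, smul_smul, smul_add, smul_smul, smul_smul]
    congr 1
    · congr 1; ring
    · congr 1
      have hcancel : ‖T z‖ * ‖T z‖⁻¹ = 1 := mul_inv_cancel₀ hw₀n.ne'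
      linear_combination (b * c⁻¹) * hcancel
  rw [heq, norm_smul, norm_inv, Real.norm_eq_abs, abs_of_pos hcpos]
  have hnle : ‖T (a • x + b • z)‖ ≤ c := by
    have := hcle (a • x + b • z)
    rw [hab, mul_one] at this
    exact this
  calc c⁻¹ * ‖T (a • x + b • z)‖ ≤ c⁻¹ * c := by
        exact mul_le_mul_of_nonneg_left hnle (inv_pos.2 hcpos).le
  _ = 1 := inv_mul_cancel₀ hcpos.ne'
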